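/- Two-state problem, dominated regime: let 0 ≤ γ < 1, let N be the 2×2 real symmetric matrix with diagonal entries 1 and off-diagonal entries −γ, and let η_1, η_2 > 0 with η_1 + η_2 = 1. If η_2 < γ² η_1 (i.e., √(η_2/η_1) < γ), then the maximum of η_1 x_1 + η_2 x_2 over x ∈ ℝ² with x_1, x_2 ≥ 0 and N − diag(x) positive semidefinite equals η_1 (1 − γ²), and it is attained at x_1 = 1 − γ², x_2 = 0. -/

import Mathlib

/-- Two-state unambiguous discrimination, dominated regime `√(η₂/η₁) < γ`: the
maximum success probability is `η₁ (1 - γ²)`, attained at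
`x₁ = 1 - γ²`, `x₂ = 0`. -/
theorem two_state_dominated
    (γ η₁ η₂ : ℝ) (hγ0 : 0 ≤ γ) (hγ1 : γ < 1)
    (hη₁ : 0 < η₁) (hη₂ : 0 < η₂) (hsum : η₁ + η₂ = 1)
    (h : η₂ < γ ^ 2 * η₁) :
    IsGreatest {p : ℝ | ∃ x : Fin 2 → ℝ, 0 ≤ x 0 ∧ 0 ≤ x 1 ∧
        (!![1, -γ; -γ, 1] - Matrix.diagonal x).PosSemidef ∧
        p = η₁ * x 0 + η₂ * x 1}
      (η₁ * (1 - γ ^ 2)) ∧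
    (0 ≤ 1 - γ ^ 2 ∧
      (!![1, -γ; -γ, 1] - Matrix.diagonal ![1 - γ ^ 2, 0]).PosSemidef ∧
      η₁ * (1 - γ ^ 2) + η₂ * 0 = η₁ * (1 - γ ^ 2)) := by
  have hγpos : 0 < γ := by nlinarith
  have hpsd : (!![1, -γ; -γ, 1] - Matrix.diagonal ![1 - γ ^ 2, 0]).PosSemidef := by
    rw [Matrix.posSemidef_iff_dotProduct_mulVec]
    constructor
    · unfold Matrix.IsHermitian
      ext i j
      fin_cases i <;> fin_cases j <;>
        simp [Matrix.conjTranspose, Matrix.diagonal, Matrix.vecHead, Matrix.vecTail]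
    · intro v
      simp [Matrix.mulVec, dotProduct, Fin.sum_univ_two, Matrix.diagonal,
        Matrix.sub_apply]
      nlinarith [sq_nonneg (γ * v 0 - v 1)]
  refine ⟨⟨⟨![1 - γ ^ 2, 0], by show (0:ℝ) ≤ 1 - γ ^ 2; nlinarith, by norm_num, hpsd, by norm_num⟩, ?_⟩,
    by nlinarith, hpsd, by ring⟩
  rintro p ⟨x, hx0, hx1, hp, rfl⟩
  have hA := hp.dotProduct_mulVec_nonneg ![γ, 1 - x 0]
  have hB := hp.dotProduct_mulVec_nonneg ![1 - x 1, γ]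
  have hC := hp.dotProduct_mulVec_nonneg ![1, 1]
  have h00 := hp.dotProduct_mulVec_nonneg ![1, 0]
  have h11 := hp.dotProduct_mulVec_nonneg ![0, 1]
  simp [Matrix.mulVec, dotProduct, Fin.sum_univ_two, Matrix.diagonal,
    Matrix.sub_apply, Matrix.vecHead, Matrix.vecTail] at hA hB hC h00 h11
  have hdet : (1 - x 0) * (1 - x 1) ≥ γ ^ 2 := by
    by_contra hcon
    push_neg at hcon
    have ha : 1 - x 0 = 0 := by nlinarith
    have hb : 1 - x 1 = 0 := by nlinarith
    nlinarith
  have hbpos : 0 < 1 - x 1 := by nlinarith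
  nlinarith [mul_nonneg hη₁.le (sub_nonneg.2 hdet), mul_nonneg hx1 (sub_pos.2 h).le,
    mul_nonneg hη₂.le (sq_nonneg (x 1)), hbpos]
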